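/- Let Q ⊂ ℝ^n be a compact convex set, f differentiable and convex on a neighborhood of Q, x* ∈ Q a minimizer of f over Q, and r > 0 such that the closed ball B(x*, r) ⊆ Q. Then for every x ∈ Q, sup_{u ∈ Q} ⟪∇f(x), x - u⟫ ≥ r·‖∇f(x)‖. -/

import Mathlib

open RealInnerProductSpace

lemma le_biSup_aux {α : Type*} (φ : α → ℝ) {s : Set α} (hbdd : BddAbove (φ '' s))
    {u : α} (hu : u ∈ s) : φ u ≤ ⨆ v ∈ s, φ v := by
  obtain ⟨C, hC⟩ := hbdd
  have B : BddAbove (Set.range fun v => ⨆ _ : v ∈ s, φ v) := by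
    refine ⟨max C 0, ?_⟩
    rintro _ ⟨v, rfl⟩
    by_cases hv : v ∈ s
    · show (⨆ _ : v ∈ s, φ v) ≤ _
      rw [ciSup_pos hv]
      exact le_max_of_le_left (hC ⟨v, hv, rfl⟩)
    · simp [hv, Real.iSup_of_isEmpty, le_max_right]
  have := le_ciSup B u
  rwa [ciSup_pos hu] at this

/-- First-order condition: gradient inequality for convex functions. -/
lemma grad_ineq_aux {n : ℕ} (f : EuclideanSpace ℝ (Fin n) → ℝ)
    (hconv : ConvexOn ℝ Set.univ f) (hdiff : Differentiable ℝ f)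
    (x y : EuclideanSpace ℝ (Fin n)) :
    ⟪gradient f x, y - x⟫ ≤ f y - f x := by
  set g : ℝ → ℝ := fun t => f (x + t • (y - x)) with hg
  have hcurve : HasDerivAt (fun t : ℝ => x + t • (y - x)) (y - x) 0 := by
    simpa using ((hasDerivAt_id (0:ℝ)).smul_const (y - x)).const_add x
  have hf : HasFDerivAt f (InnerProductSpace.toDual ℝ _ (gradient f x)) x :=
    (hdiff x).hasGradientAt.hasFDerivAt
  have hf' : HasFDerivAt f (InnerProductSpace.toDual ℝ _ (gradient f x))
      ((fun t : ℝ => x + t • (y - x)) 0) := by simpa using hf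
  have hgd : HasDerivAt g ⟪gradient f x, y - x⟫ 0 := by
    simpa [g, InnerProductSpace.toDual_apply_apply, Function.comp_def] using hf'.comp_hasDerivAt 0 hcurve
  have hgconv : ConvexOn ℝ Set.univ g := by
    have := hconv.comp_affineMap
      (AffineMap.lineMap x y : ℝ →ᵃ[ℝ] EuclideanSpace ℝ (Fin n))
    have he : (Set.univ : Set ℝ) ⊆ (AffineMap.lineMap x y : ℝ →ᵃ[ℝ] _) ⁻¹' Set.univ := by
      simp
    refine ConvexOn.congr (this.subset he (convex_univ)) ?_
    intro t ht
    simp only [g, Function.comp, AffineMap.lineMap_apply_module]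
    congr 1
    module
  have := hgconv.le_slope_of_hasDerivAt (Set.mem_univ (0:ℝ)) (Set.mem_univ (1:ℝ))
    one_pos hgd
  simpa [slope_def_field, g] using this

theorem stmt7 {n : ℕ} (Q : Set (EuclideanSpace ℝ (Fin n)))
    (hQconv : Convex ℝ Q) (hQcomp : IsCompact Q)
    (f : EuclideanSpace ℝ (Fin n) → ℝ)
    (hconv : ConvexOn ℝ Set.univ f) (hdiff : Differentiable ℝ f)
    (xstar : EuclideanSpace ℝ (Fin n)) (hxstar : xstar ∈ Q)
    (hmin : ∀ y ∈ Q, f xstar ≤ f y)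
    (r : ℝ) (hr : 0 < r) (hball : Metric.closedBall xstar r ⊆ Q)
    (x : EuclideanSpace ℝ (Fin n)) (hx : x ∈ Q) :
    r * ‖gradient f x‖ ≤ ⨆ u ∈ Q, ⟪gradient f x, x - u⟫ := by
  set g := gradient f x with hgdef
  set φ : EuclideanSpace ℝ (Fin n) → ℝ := fun u => ⟪g, x - u⟫ with hφ
  have hφcont : Continuous φ := by
    exact Continuous.inner continuous_const (continuous_const.sub continuous_id)
  have hbdd : BddAbove (φ '' Q) :=
    (hQcomp.image hφcont).bddAbove
  rcases eq_or_ne g 0 with hg0 | hg0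
  · rw [hg0]
    simp only [norm_zero, mul_zero]
    calc (0:ℝ) = φ x := by simp [φ, hg0]
      _ ≤ ⨆ u ∈ Q, ⟪g, x - u⟫ := le_biSup_aux φ hbdd hx
      _ = _ := by rw [hg0]
  · set u0 : EuclideanSpace ℝ (Fin n) := xstar - (r / ‖g‖) • g with hu0
    have hgn : (0:ℝ) < ‖g‖ := norm_pos_iff.mpr hg0
    have hu0Q : u0 ∈ Q := by
      apply hball
      rw [Metric.mem_closedBall, dist_eq_norm]
      have : u0 - xstar = -((r / ‖g‖) • g) := by rw [hu0]; abel
      rw [this, norm_neg, norm_smul, Real.norm_eq_abs, abs_of_pos (by positivity)]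
      rw [div_mul_cancel₀ _ (ne_of_gt hgn)]
    have hdot : 0 ≤ ⟪g, x - xstar⟫ := by
      have h1 : ⟪g, xstar - x⟫ ≤ f xstar - f x := grad_ineq_aux f hconv hdiff x xstar
      have h2 : f xstar - f x ≤ 0 := by linarith [hmin x hx]
      have h3 : ⟪g, x - xstar⟫ = -⟪g, xstar - x⟫ := by
        rw [← inner_neg_right]; congr 1; abel
      linarith
    have hval : r * ‖g‖ ≤ φ u0 := by
      have : φ u0 = ⟪g, x - xstar⟫ + (r / ‖g‖) * ⟪g, g⟫ := by
        simp only [φ, hu0]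
        rw [show x - (xstar - (r / ‖g‖) • g) = (x - xstar) + (r / ‖g‖) • g by abel,
          inner_add_right, inner_smul_right]
      rw [this, real_inner_self_eq_norm_sq]
      have : (r / ‖g‖) * ‖g‖ ^ 2 = r * ‖g‖ := by
        field_simp
      nlinarith
    calc r * ‖g‖ ≤ φ u0 := hval
      _ ≤ ⨆ u ∈ Q, ⟪g, x - u⟫ := le_biSup_aux φ hbdd hu0Q
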